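/- Let u : ℝ² → ℝ be a C³ solution of u_yy = (u_y + y)·u_xx − u_x·u_xy − 2. Then the function v(x,y) := 4u − 3x·u_x − 2y·u_y satisfies the linearized equation v_yy = (u_y + y)·v_xx + u_xx·v_y − u_x·v_xy − u_xy·v_x at every point of ℝ². -/

import Mathlib

/-- Partial derivative of `f : ℝ² → ℝ` in the direction `v`. -/
noncomputable def pd2 (v : ℝ × ℝ) (f : ℝ × ℝ → ℝ) : ℝ × ℝ → ℝ :=
  fun p => fderiv ℝ f p v

noncomputable def dx : (ℝ × ℝ → ℝ) → ℝ × ℝ → ℝ := pd2 (1, 0)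
noncomputable def dy : (ℝ × ℝ → ℝ) → ℝ × ℝ → ℝ := pd2 (0, 1)

section PD2
variable {f g : ℝ × ℝ → ℝ} {p w : ℝ × ℝ}

lemma pd2_add (hf : DifferentiableAt ℝ f p) (hg : DifferentiableAt ℝ g p) :
    pd2 w (fun q => f q + g q) p = pd2 w f p + pd2 w g p := by
  simp [pd2, fderiv_fun_add hf hg]

lemma pd2_sub (hf : DifferentiableAt ℝ f p) (hg : DifferentiableAt ℝ g p) :
    pd2 w (fun q => f q - g q) p = pd2 w f p - pd2 w g p := by
  simp [pd2, fderiv_fun_sub hf hg]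

lemma pd2_mul (hf : DifferentiableAt ℝ f p) (hg : DifferentiableAt ℝ g p) :
    pd2 w (fun q => f q * g q) p = f p * pd2 w g p + g p * pd2 w f p := by
  simp [pd2, fderiv_fun_mul hf hg]

lemma pd2_const_mul (hf : DifferentiableAt ℝ f p) (c : ℝ) :
    pd2 w (fun q => c * f q) p = c * pd2 w f p := by
  simp [pd2, fderiv_const_mul hf]

lemma pd2_sub_const (c : ℝ) : pd2 w (fun q => f q - c) p = pd2 w f p := by
  simp [pd2, fderiv_sub_const]

lemma pd2_fst : pd2 w (fun q : ℝ × ℝ => q.1) p = w.1 := by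
  show (fderiv ℝ Prod.fst p) w = w.1
  rw [fderiv_fst]; rfl

lemma pd2_snd : pd2 w (fun q : ℝ × ℝ => q.2) p = w.2 := by
  show (fderiv ℝ Prod.snd p) w = w.2
  rw [fderiv_snd]; rfl

lemma pd2_const_mul_fst (c : ℝ) : pd2 w (fun q : ℝ × ℝ => c * q.1) p = c * w.1 := by
  rw [pd2_const_mul (by fun_prop) c, pd2_fst]

lemma pd2_const_mul_snd (c : ℝ) : pd2 w (fun q : ℝ × ℝ => c * q.2) p = c * w.2 := by
  rw [pd2_const_mul (by fun_prop) c, pd2_snd]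

lemma contDiff_pd2 {n m : WithTop ℕ∞} (v : ℝ × ℝ) (hf : ContDiff ℝ n f) (h : m + 1 ≤ n) :
    ContDiff ℝ m (pd2 v f) :=
  ((ContinuousLinearMap.apply ℝ ℝ v).contDiff).comp (hf.fderiv_right h)

lemma pd2_pd2 (w v : ℝ × ℝ) (hf : DifferentiableAt ℝ (fderiv ℝ f) p) :
    pd2 w (pd2 v f) p = fderiv ℝ (fderiv ℝ f) p w v := by
  show fderiv ℝ (fun q => (fderiv ℝ f q) v) p w = _
  rw [fderiv_clm_apply hf (differentiableAt_const v)]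
  simp

lemma pd2_symm (hf : ContDiff ℝ 2 f) (v w p) :
    pd2 w (pd2 v f) p = pd2 v (pd2 w f) p := by
  have hd : DifferentiableAt ℝ (fderiv ℝ f) p :=
    ((hf.fderiv_right (m := 1) (by norm_num)).differentiable one_ne_zero).differentiableAt
  rw [pd2_pd2 w v hd, pd2_pd2 v w hd]
  exact (hf.contDiffAt.isSymmSndFDerivAt (by simp)) w v

end PD2

theorem phi_0_is_symmetry (u : ℝ × ℝ → ℝ) (hu : ContDiff ℝ 3 u)
    (heq : ∀ p : ℝ × ℝ,
      dy (dy u) p = (dy u p + p.2) * dx (dx u) p - dx u p * dx (dy u) p - 2) :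
    ∀ p : ℝ × ℝ,
      (fun v : ℝ × ℝ → ℝ =>
        dy (dy v) p = (dy u p + p.2) * dx (dx v) p + dx (dx u) p * dy v p
          - dx u p * dx (dy v) p - dx (dy u) p * dx v p)
      (fun q => 4 * u q - 3 * q.1 * dx u q - 2 * q.2 * dy u q) := by
  intro p
  simp only [dx, dy] at heq ⊢
  -- basic regularity
  have hu1 : Differentiable ℝ u := hu.differentiable (by norm_num)
  have hD2 : ∀ z : ℝ × ℝ, ContDiff ℝ 2 (pd2 z u) :=
    fun z => contDiff_pd2 z hu (by norm_num)
  have hd2 : ∀ z : ℝ × ℝ, Differentiable ℝ (pd2 z u) :=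
    fun z => (hD2 z).differentiable (by norm_num)
  have hd1 : ∀ (z z' : ℝ × ℝ), Differentiable ℝ (pd2 z (pd2 z' u)) :=
    fun z z' => (contDiff_pd2 z (hD2 z') (by norm_num)).differentiable one_ne_zero
  have hu2 : ContDiff ℝ 2 u := hu.of_le (by norm_num)
  -- first derivative of the candidate symmetry
  have key1 : ∀ (w p' : ℝ × ℝ),
      pd2 w (fun q => 4 * u q - 3 * q.1 * pd2 (1,0) u q - 2 * q.2 * pd2 (0,1) u q) p'
        = 4 * pd2 w u p' - 3 * w.1 * pd2 (1,0) u p' - 3 * p'.1 * pd2 w (pd2 (1,0) u) p'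
          - 2 * w.2 * pd2 (0,1) u p' - 2 * p'.2 * pd2 w (pd2 (0,1) u) p' := by
    intro w p'
    have A := hd2 ((1:ℝ),(0:ℝ)); have B := hd2 ((0:ℝ),(1:ℝ))
    rw [pd2_sub (by fun_prop) (by fun_prop), pd2_sub (by fun_prop) (by fun_prop),
        pd2_const_mul (by fun_prop) 4, pd2_mul (by fun_prop) (by fun_prop),
        pd2_const_mul_fst 3, pd2_mul (by fun_prop) (by fun_prop), pd2_const_mul_snd 2]
    ring
  have key1f : ∀ w : ℝ × ℝ,
      pd2 w (fun q => 4 * u q - 3 * q.1 * pd2 (1,0) u q - 2 * q.2 * pd2 (0,1) u q)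
        = fun p' => 4 * pd2 w u p' - 3 * w.1 * pd2 (1,0) u p'
            - 3 * p'.1 * pd2 w (pd2 (1,0) u) p'
            - 2 * w.2 * pd2 (0,1) u p' - 2 * p'.2 * pd2 w (pd2 (0,1) u) p' :=
    fun w => funext (key1 w)
  -- second derivatives of the candidate symmetry
  have key2 : ∀ (w' w : ℝ × ℝ),
      pd2 w' (pd2 w (fun q => 4 * u q - 3 * q.1 * pd2 (1,0) u q - 2 * q.2 * pd2 (0,1) u q)) p
        = 4 * pd2 w' (pd2 w u) p
          - 3 * w.1 * pd2 w' (pd2 (1,0) u) p - 3 * w'.1 * pd2 w (pd2 (1,0) u) p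
          - 3 * p.1 * pd2 w' (pd2 w (pd2 (1,0) u)) p
          - 2 * w.2 * pd2 w' (pd2 (0,1) u) p - 2 * w'.2 * pd2 w (pd2 (0,1) u) p
          - 2 * p.2 * pd2 w' (pd2 w (pd2 (0,1) u)) p := by
    intro w' w
    have A := hd2 ((1:ℝ),(0:ℝ)); have B := hd2 ((0:ℝ),(1:ℝ))
    have C := hd1 w ((1:ℝ),(0:ℝ)); have D := hd1 w ((0:ℝ),(1:ℝ))
    have E := hd2 w
    rw [key1f w]
    rw [pd2_sub (by fun_prop) (by fun_prop), pd2_sub (by fun_prop) (by fun_prop),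
        pd2_sub (by fun_prop) (by fun_prop), pd2_sub (by fun_prop) (by fun_prop),
        pd2_const_mul (by fun_prop) 4, pd2_const_mul (by fun_prop) (3 * w.1),
        pd2_const_mul (by fun_prop) (2 * w.2),
        pd2_mul (by fun_prop) (by fun_prop), pd2_const_mul_fst 3,
        pd2_mul (by fun_prop) (by fun_prop), pd2_const_mul_snd 2]
    ring
  -- derivative of the equation
  have heqf : pd2 (0,1) (pd2 (0,1) u)
      = fun q => (pd2 (0,1) u q + q.2) * pd2 (1,0) (pd2 (1,0) u) q
          - pd2 (1,0) u q * pd2 (1,0) (pd2 (0,1) u) q - 2 := funext heq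
  have keyH : ∀ w : ℝ × ℝ,
      pd2 w (pd2 (0,1) (pd2 (0,1) u)) p
        = (pd2 w (pd2 (0,1) u) p + w.2) * pd2 (1,0) (pd2 (1,0) u) p
          + (pd2 (0,1) u p + p.2) * pd2 w (pd2 (1,0) (pd2 (1,0) u)) p
          - pd2 w (pd2 (1,0) u) p * pd2 (1,0) (pd2 (0,1) u) p
          - pd2 (1,0) u p * pd2 w (pd2 (1,0) (pd2 (0,1) u)) p := by
    intro w
    have A := hd2 ((1:ℝ),(0:ℝ)); have B := hd2 ((0:ℝ),(1:ℝ))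
    have C := hd1 ((1:ℝ),(0:ℝ)) ((1:ℝ),(0:ℝ)); have D := hd1 ((1:ℝ),(0:ℝ)) ((0:ℝ),(1:ℝ))
    rw [heqf, pd2_sub_const, pd2_sub (by fun_prop) (by fun_prop),
        pd2_mul (by fun_prop) (by fun_prop), pd2_mul (by fun_prop) (by fun_prop),
        pd2_add (by fun_prop) (by fun_prop), pd2_snd]
    ring
  -- symmetry normalizations
  have sxyf : pd2 (0,1) (pd2 (1,0) u) = pd2 (1,0) (pd2 (0,1) u) :=
    funext (fun q => pd2_symm hu2 ((1:ℝ),(0:ℝ)) ((0:ℝ),(1:ℝ)) q)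
  -- third order canonicalizations
  have t1 : pd2 (0,1) (pd2 (0,1) (pd2 (1,0) u)) p
      = pd2 (1,0) (pd2 (0,1) (pd2 (0,1) u)) p := by
    rw [sxyf]; exact pd2_symm (hD2 ((0:ℝ),(1:ℝ))) ((1:ℝ),(0:ℝ)) ((0:ℝ),(1:ℝ)) p
  have t2 : pd2 (1,0) (pd2 (0,1) (pd2 (1,0) u)) p
      = pd2 (1,0) (pd2 (1,0) (pd2 (0,1) u)) p := by rw [sxyf]
  have t3 : pd2 (0,1) (pd2 (1,0) (pd2 (1,0) u)) p
      = pd2 (1,0) (pd2 (1,0) (pd2 (0,1) u)) p :=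
    (pd2_symm (hD2 ((1:ℝ),(0:ℝ))) ((1:ℝ),(0:ℝ)) ((0:ℝ),(1:ℝ)) p).trans t2
  have t4 : pd2 (0,1) (pd2 (1,0) (pd2 (0,1) u)) p
      = pd2 (1,0) (pd2 (0,1) (pd2 (0,1) u)) p :=
    pd2_symm (hD2 ((0:ℝ),(1:ℝ))) ((1:ℝ),(0:ℝ)) ((0:ℝ),(1:ℝ)) p
  have E1 := keyH ((1:ℝ),(0:ℝ))
  have E2 := keyH ((0:ℝ),(1:ℝ))
  rw [t3, t4] at E2
  rw [key2 (0,1) (0,1), key2 (1,0) (1,0), key2 (1,0) (0,1), key1 (0,1) p, key1 (1,0) p]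
  rw [t1, t2, sxyf] at *
  norm_num at E1 E2 ⊢
  linear_combination (-3 * p.1 : ℝ) * E1 + (-2 * p.2 : ℝ) * E2
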